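/- Let θ > 0, r, ρ ∈ ℝ, v = 2π/θ, k ∈ ℕ, T with kθ ≤ T < (k+1)θ, and f₀ : ℝ → ℝ bounded, measurable and nonnegative. If α* : ℝ → ℝ with 0 ≤ α* ≤ 1 a.e. maximizes the revenue functional G over all admissible controls, then for almost every t ∈ (0, T−θk) with f_k^{α*}(t) > 0 one has α*(t+θk) = 1/2; that is, on the final (possibly incomplete) round the optimal harvesting share equals 1/2 wherever the remaining stock is positive. -/

import Mathlib

open MeasureTheory

/-- The round-`l` density just before harvesting in the spatial harvesting model:
`fDen r θ f₀ α 0 t = e^{rt} f₀(vt)` with speed `v = 2π/θ`, and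
`fDen r θ f₀ α (l+1) t = e^{rθ}(1 − α(t+θl)) · fDen r θ f₀ α l t`. -/
noncomputable def fDen (r θ : ℝ) (f₀ α : ℝ → ℝ) : ℕ → ℝ → ℝ
  | 0, t => Real.exp (r * t) * f₀ (2 * Real.pi / θ * t)
  | l + 1, t =>
      Real.exp (r * θ) * (1 - α (t + θ * (l : ℝ))) * fDen r θ f₀ α l t

/-- The sensitivity (Gateaux derivative of the state in direction `w`):
`z_0 = 0`, `z_{l+1}(t) = e^{rθ}[−w(t+θl) f_l^{α}(t) + (1−α(t+θl)) z_l(t)]`. -/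
noncomputable def zSens (r θ : ℝ) (f₀ α w : ℝ → ℝ) : ℕ → ℝ → ℝ
  | 0, _ => 0
  | l + 1, t =>
      Real.exp (r * θ) *
        (-(w (t + θ * (l : ℝ))) * fDen r θ f₀ α l t +
          (1 - α (t + θ * (l : ℝ))) * zSens r θ f₀ α w l t)

/-- The discounted revenue functional
`G(α) = Σ_{l=0}^{k−1} ∫_0^θ e^{−ρ(t+θl)} α(t+θl)(1−α(t+θl)) f_l^{α}(t) dt
      + ∫_0^{T−kθ} e^{−ρ(t+θk)} α(t+θk)(1−α(t+θk)) f_k^{α}(t) dt`. -/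
noncomputable def revenue (r ρ θ T : ℝ) (k : ℕ) (f₀ α : ℝ → ℝ) : ℝ :=
  (∑ l ∈ Finset.range k, ∫ t in (0 : ℝ)..θ,
      Real.exp (-ρ * (t + θ * (l : ℝ))) * α (t + θ * (l : ℝ)) *
        (1 - α (t + θ * (l : ℝ))) * fDen r θ f₀ α l t) +
    ∫ t in (0 : ℝ)..(T - (k : ℝ) * θ),
      Real.exp (-ρ * (t + θ * (k : ℝ))) * α (t + θ * (k : ℝ)) *
        (1 - α (t + θ * (k : ℝ))) * fDen r θ f₀ α k t

/-- A harvesting-share control is admissible if it is measurable with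
`0 ≤ α ≤ 1` almost everywhere. -/
def Admissible (α : ℝ → ℝ) : Prop :=
  Measurable α ∧ ∀ᵐ t : ℝ, 0 ≤ α t ∧ α t ≤ 1

/-- final-round characterization, Proposition 2.
If `α*` maximizes the revenue functional, then on the final (possibly
incomplete) round the optimal harvesting share equals `1/2` almost everywhere
where the remaining stock is positive. -/
theorem final_round_share_half
    (θ : ℝ) (hθ : 0 < θ) (r ρ : ℝ) (k : ℕ) (T : ℝ)
    (hT₁ : (k : ℝ) * θ ≤ T) (hT₂ : T < ((k : ℝ) + 1) * θ)
    (f₀ : ℝ → ℝ) (hf₀m : Measurable f₀) (hf₀b : ∃ M, ∀ x, |f₀ x| ≤ M)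
    (hf₀pos : ∀ x, 0 ≤ f₀ x)
    (αs : ℝ → ℝ) (hαs : Admissible αs)
    (hopt : ∀ α : ℝ → ℝ, Admissible α →
      revenue r ρ θ T k f₀ α ≤ revenue r ρ θ T k f₀ αs) :
    ∀ᵐ t ∂(MeasureTheory.volume.restrict (Set.Ioo (0 : ℝ) (T - θ * (k : ℝ)))),
      0 < fDen r θ f₀ αs k t → αs (t + θ * (k : ℝ)) = 1 / 2 := by
  classical
  obtain ⟨hαm, hαae⟩ := hαs
  obtain ⟨M, hM⟩ := hf₀b
  have hM0 : 0 ≤ M := le_trans (abs_nonneg _) (hM 0)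
  set s : ℝ := T - (k : ℝ) * θ with hsdef
  have hs0 : 0 ≤ s := by rw [hsdef]; linarith
  have hsθ : s < θ := by rw [hsdef]; nlinarith
  -- a.e. bounds for shifted control
  have hshift : ∀ c : ℝ, ∀ᵐ t : ℝ, 0 ≤ αs (t + c) ∧ αs (t + c) ≤ 1 := fun c =>
    (measurePreserving_add_right volume c).quasiMeasurePreserving.ae hαae
  -- the competitor control
  set α : ℝ → ℝ := fun t => if t < θ * (k : ℝ) then αs t else 1 / 2 with hαdef
  have hα1 : ∀ u : ℝ, u < θ * (k : ℝ) → α u = αs u := by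
    intro u hu; simp only [hαdef]; rw [if_pos hu]
  have hα2 : ∀ u : ℝ, ¬u < θ * (k : ℝ) → α u = 1 / 2 := by
    intro u hu; simp only [hαdef]; rw [if_neg hu]
  have hαadm : Admissible α := by
    constructor
    · exact Measurable.ite (measurableSet_lt measurable_id measurable_const) hαm
        measurable_const
    · filter_upwards [hαae] with t ht
      simp only [hαdef]
      split_ifs with h
      · exact ht
      · norm_num
  -- the modified control gives the same densities for t < θ
  have hfeq : ∀ l : ℕ, l ≤ k → ∀ t : ℝ, t < θ →
      fDen r θ f₀ α l t = fDen r θ f₀ αs l t := by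
    intro l
    induction l with
    | zero => intro _ t _; rfl
    | succ l ih =>
      intro hlk t ht
      have h1 : (l : ℝ) + 1 ≤ (k : ℝ) := by exact_mod_cast hlk
      have hl : t + θ * (l : ℝ) < θ * (k : ℝ) := by nlinarith
      simp only [fDen]
      rw [ih (Nat.le_of_succ_le hlk) t ht, hα1 _ hl]
  -- nonnegativity of the densities
  have hfpos : ∀ l : ℕ, ∀ᵐ t : ℝ, 0 ≤ fDen r θ f₀ αs l t := by
    intro l
    induction l with
    | zero =>
      filter_upwards with t
      exact mul_nonneg (Real.exp_pos _).le (hf₀pos _)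
    | succ l ih =>
      filter_upwards [ih, hshift (θ * (l : ℝ))] with t h1 h2
      simp only [fDen]
      exact mul_nonneg (mul_nonneg (Real.exp_pos _).le (by linarith [h2.2])) h1
  -- boundedness of the densities on (0, s]
  have hfbd : ∀ l : ℕ, ∀ᵐ t : ℝ, t ∈ Set.Ioc (0 : ℝ) s →
      |fDen r θ f₀ αs l t| ≤ Real.exp (r * θ) ^ l * (Real.exp (|r| * θ) * M) := by
    intro l
    induction l with
    | zero =>
      filter_upwards with t ht
      simp only [fDen, pow_zero, one_mul]
      rw [abs_mul, abs_of_pos (Real.exp_pos _)]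
      have h1 : Real.exp (r * t) ≤ Real.exp (|r| * θ) := by
        apply Real.exp_le_exp.2
        have h2 : r * t ≤ |r| * t :=
          mul_le_mul_of_nonneg_right (le_abs_self r) ht.1.le
        nlinarith [abs_nonneg r, ht.2, hsθ]
      exact mul_le_mul h1 (hM _) (abs_nonneg _) (Real.exp_pos _).le
    | succ l ih =>
      filter_upwards [ih, hshift (θ * (l : ℝ))] with t h1 h2 ht
      simp only [fDen, pow_succ]
      rw [abs_mul, abs_mul, abs_of_pos (Real.exp_pos _)]
      have h3 : |1 - αs (t + θ * (l : ℝ))| ≤ 1 := by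
        rw [abs_le]; constructor <;> linarith [h2.1, h2.2]
      have h4 := h1 ht
      have h5 : (0:ℝ) ≤ Real.exp (r * θ) ^ l * (Real.exp (|r| * θ) * M) :=
        le_trans (abs_nonneg _) h4
      nlinarith [Real.exp_pos (r * θ), abs_nonneg (fDen r θ f₀ αs l t),
        abs_nonneg (1 - αs (t + θ * (l : ℝ))),
        mul_le_mul h3 h4 (abs_nonneg _) zero_le_one]
  -- measurability of the densities
  have hfm : ∀ l : ℕ, Measurable (fDen r θ f₀ αs l) := by
    intro l
    induction l with
    | zero =>
      exact (Real.measurable_exp.comp (measurable_id.const_mul r)).mul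
        (hf₀m.comp (measurable_id.const_mul _))
    | succ l ih =>
      have : fDen r θ f₀ αs (l + 1) = fun t =>
          Real.exp (r * θ) * (1 - αs (t + θ * (l : ℝ))) * fDen r θ f₀ αs l t := by
        funext t; simp [fDen]
      rw [this]
      exact (measurable_const.mul
        (measurable_const.sub (hαm.comp (measurable_id.add_const _)))).mul ih
  -- integrability package
  have key : ∀ φ : ℝ → ℝ, Measurable φ → (∀ᵐ t : ℝ, |φ t| ≤ 1) →
      IntervalIntegrable
        (fun t => Real.exp (-ρ * (t + θ * (k : ℝ))) * φ t * fDen r θ f₀ αs k t)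
        volume 0 s := by
    intro φ hφm hφb
    rw [intervalIntegrable_iff, Set.uIoc_of_le hs0]
    have hmeas : AEStronglyMeasurable
        (fun t => Real.exp (-ρ * (t + θ * (k : ℝ))) * φ t * fDen r θ f₀ αs k t)
        (volume.restrict (Set.Ioc (0 : ℝ) s)) :=
      (((Real.measurable_exp.comp ((measurable_id.add_const _).const_mul (-ρ))).mul
        hφm).mul (hfm k)).aestronglyMeasurable
    refine Integrable.mono'
      (g := fun _ => Real.exp (|ρ| * (θ * ((k : ℝ) + 1))) *
        (Real.exp (r * θ) ^ k * (Real.exp (|r| * θ) * M)))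
      (integrableOn_const measure_Ioc_lt_top.ne) hmeas ?_
    filter_upwards [ae_restrict_of_ae (hfbd k), ae_restrict_of_ae hφb,
      ae_restrict_mem measurableSet_Ioc] with t hbF hbφ htmem
    have hF' := hbF htmem
    have he' : |Real.exp (-ρ * (t + θ * (k : ℝ)))| ≤
        Real.exp (|ρ| * (θ * ((k : ℝ) + 1))) := by
      rw [abs_of_pos (Real.exp_pos _)]
      apply Real.exp_le_exp.2
      have hk0 : (0:ℝ) ≤ (k : ℝ) := Nat.cast_nonneg k
      have h1 : (0:ℝ) ≤ t + θ * (k : ℝ) := by nlinarith [htmem.1]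
      have h2 : t + θ * (k : ℝ) ≤ θ * ((k : ℝ) + 1) := by nlinarith [htmem.2]
      calc -ρ * (t + θ * (k : ℝ)) ≤ |ρ| * (t + θ * (k : ℝ)) :=
            mul_le_mul_of_nonneg_right (neg_le_abs ρ) h1
        _ ≤ |ρ| * (θ * ((k : ℝ) + 1)) :=
            mul_le_mul_of_nonneg_left h2 (abs_nonneg ρ)
    calc ‖Real.exp (-ρ * (t + θ * (k : ℝ))) * φ t * fDen r θ f₀ αs k t‖
        = |Real.exp (-ρ * (t + θ * (k : ℝ)))| * |φ t| * |fDen r θ f₀ αs k t| := by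
          rw [Real.norm_eq_abs, abs_mul, abs_mul]
      _ ≤ Real.exp (|ρ| * (θ * ((k : ℝ) + 1))) * 1 *
          (Real.exp (r * θ) ^ k * (Real.exp (|r| * θ) * M)) := by
          gcongr
      _ = Real.exp (|ρ| * (θ * ((k : ℝ) + 1))) *
          (Real.exp (r * θ) ^ k * (Real.exp (|r| * θ) * M)) := by ring
  -- the sum terms of the revenue agree
  have hsum : ∀ l ∈ Finset.range k,
      (∫ t in (0 : ℝ)..θ, Real.exp (-ρ * (t + θ * (l : ℝ))) * α (t + θ * (l : ℝ)) *
        (1 - α (t + θ * (l : ℝ))) * fDen r θ f₀ α l t)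
      = ∫ t in (0 : ℝ)..θ, Real.exp (-ρ * (t + θ * (l : ℝ))) * αs (t + θ * (l : ℝ)) *
        (1 - αs (t + θ * (l : ℝ))) * fDen r θ f₀ αs l t := by
    intro l hl
    have hl' := Finset.mem_range.1 hl
    apply intervalIntegral.integral_congr_ae
    have hne : ∀ᵐ t : ℝ, t ≠ θ := by simp [ae_iff]
    filter_upwards [hne] with t htne htmem
    rw [Set.uIoc_of_le hθ.le] at htmem
    have htθ : t < θ := lt_of_le_of_ne htmem.2 htne
    have h1 : (l : ℝ) + 1 ≤ (k : ℝ) := by exact_mod_cast hl'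
    have harg : t + θ * (l : ℝ) < θ * (k : ℝ) := by nlinarith
    rw [hα1 _ harg, hfeq l hl'.le t htθ]
  -- the final-round term with the competitor
  have hfin : (∫ t in (0 : ℝ)..s, Real.exp (-ρ * (t + θ * (k : ℝ))) * α (t + θ * (k : ℝ)) *
        (1 - α (t + θ * (k : ℝ))) * fDen r θ f₀ α k t)
      = ∫ t in (0 : ℝ)..s, Real.exp (-ρ * (t + θ * (k : ℝ))) * (1 / 2) *
        (1 - 1 / 2) * fDen r θ f₀ αs k t := by
    apply intervalIntegral.integral_congr_ae
    filter_upwards with t htmem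
    rw [Set.uIoc_of_le hs0] at htmem
    have h2 : ¬t + θ * (k : ℝ) < θ * (k : ℝ) := by push_neg; linarith [htmem.1]
    rw [hα2 _ h2, hfeq k le_rfl t (lt_of_le_of_lt htmem.2 hsθ)]
  -- optimality gives the integral inequality
  have hineq : (∫ t in (0 : ℝ)..s, Real.exp (-ρ * (t + θ * (k : ℝ))) * (1 / 2) *
        (1 - 1 / 2) * fDen r θ f₀ αs k t)
      ≤ ∫ t in (0 : ℝ)..s, Real.exp (-ρ * (t + θ * (k : ℝ))) * αs (t + θ * (k : ℝ)) *
        (1 - αs (t + θ * (k : ℝ))) * fDen r θ f₀ αs k t := by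
    have h := hopt α hαadm
    simp only [revenue] at h
    rw [← hsdef] at h
    rw [Finset.sum_congr rfl hsum, hfin] at h
    linarith
  -- integrabilities
  have hint1 : IntervalIntegrable
      (fun t => Real.exp (-ρ * (t + θ * (k : ℝ))) * (1 / 2) *
        (1 - 1 / 2) * fDen r θ f₀ αs k t) volume 0 s := by
    have heq : (fun t => Real.exp (-ρ * (t + θ * (k : ℝ))) * (1 / 2) *
        (1 - 1 / 2) * fDen r θ f₀ αs k t)
        = fun t => Real.exp (-ρ * (t + θ * (k : ℝ))) * ((1:ℝ)/4) * fDen r θ f₀ αs k t := by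
      funext t; ring
    rw [heq]
    exact key _ measurable_const (by filter_upwards with t; rw [abs_of_nonneg] <;> norm_num)
  have hint2 : IntervalIntegrable
      (fun t => Real.exp (-ρ * (t + θ * (k : ℝ))) * αs (t + θ * (k : ℝ)) *
        (1 - αs (t + θ * (k : ℝ))) * fDen r θ f₀ αs k t) volume 0 s := by
    have heq : (fun t => Real.exp (-ρ * (t + θ * (k : ℝ))) * αs (t + θ * (k : ℝ)) *
        (1 - αs (t + θ * (k : ℝ))) * fDen r θ f₀ αs k t)
        = fun t => Real.exp (-ρ * (t + θ * (k : ℝ))) *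
          (αs (t + θ * (k : ℝ)) * (1 - αs (t + θ * (k : ℝ)))) * fDen r θ f₀ αs k t := by
      funext t; ring
    rw [heq]
    refine key _ ((hαm.comp (measurable_id.add_const _)).mul
      (measurable_const.sub (hαm.comp (measurable_id.add_const _)))) ?_
    filter_upwards [hshift (θ * (k : ℝ))] with t ht
    rw [abs_le]
    constructor <;> nlinarith [ht.1, ht.2]
  -- the nonnegative defect function
  set g : ℝ → ℝ := fun t => Real.exp (-ρ * (t + θ * (k : ℝ))) *
      (1 / 4 - αs (t + θ * (k : ℝ)) * (1 - αs (t + θ * (k : ℝ)))) *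
      fDen r θ f₀ αs k t with hgdef
  have hgint : IntervalIntegrable g volume 0 s := by
    have heq : g = fun t => Real.exp (-ρ * (t + θ * (k : ℝ))) *
        ((1:ℝ) / 4 - αs (t + θ * (k : ℝ)) * (1 - αs (t + θ * (k : ℝ)))) *
        fDen r θ f₀ αs k t := rfl
    rw [heq]
    refine key _ (measurable_const.sub ((hαm.comp (measurable_id.add_const _)).mul
      (measurable_const.sub (hαm.comp (measurable_id.add_const _))))) ?_
    filter_upwards [hshift (θ * (k : ℝ))] with t ht
    rw [abs_le]
    constructor <;> nlinarith [ht.1, ht.2]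
  have hgle : (∫ t in (0 : ℝ)..s, g t) ≤ 0 := by
    have heq : (∫ t in (0 : ℝ)..s, g t)
        = (∫ t in (0 : ℝ)..s, Real.exp (-ρ * (t + θ * (k : ℝ))) * (1 / 2) *
            (1 - 1 / 2) * fDen r θ f₀ αs k t)
          - ∫ t in (0 : ℝ)..s, Real.exp (-ρ * (t + θ * (k : ℝ))) * αs (t + θ * (k : ℝ)) *
            (1 - αs (t + θ * (k : ℝ))) * fDen r θ f₀ αs k t := by
      rw [← intervalIntegral.integral_sub hint1 hint2]
      apply intervalIntegral.integral_congr
      intro t _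
      simp only [hgdef]
      ring
    rw [heq]
    linarith
  -- a.e. nonnegativity of g
  have hgpos : 0 ≤ᵐ[volume.restrict (Set.Ioc (0 : ℝ) s)] g := by
    apply ae_restrict_of_ae
    filter_upwards [hfpos k] with t hF
    simp only [hgdef, Pi.zero_apply]
    have h1 : (0:ℝ) ≤ 1 / 4 - αs (t + θ * (k : ℝ)) * (1 - αs (t + θ * (k : ℝ))) := by
      nlinarith [sq_nonneg (αs (t + θ * (k : ℝ)) - 1 / 2)]
    positivity
  -- conclude g = 0 a.e. on (0, s]
  have hgzero : g =ᵐ[volume.restrict (Set.Ioc (0 : ℝ) s)] 0 := by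
    have hio : IntegrableOn g (Set.Ioc (0 : ℝ) s) volume := by
      have := hgint
      rwa [intervalIntegrable_iff, Set.uIoc_of_le hs0] at this
    have hzero : (∫ t in Set.Ioc (0 : ℝ) s, g t) = 0 := by
      have h1 : (∫ t in (0 : ℝ)..s, g t) = ∫ t in Set.Ioc (0 : ℝ) s, g t :=
        intervalIntegral.integral_of_le hs0
      have h2 : 0 ≤ ∫ t in Set.Ioc (0 : ℝ) s, g t := integral_nonneg_of_ae hgpos
      linarith [hgle, h1 ▸ hgle]
    exact (integral_eq_zero_iff_of_nonneg_ae hgpos hio).1 hzero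
  -- transfer to the goal
  have hsub : Set.Ioo (0 : ℝ) (T - θ * (k : ℝ)) ⊆ Set.Ioc (0 : ℝ) s := by
    intro t ht
    refine ⟨ht.1, ?_⟩
    rw [hsdef]
    have := ht.2
    nlinarith [ht.2]
  have hfinal := ae_restrict_of_ae_restrict_of_subset hsub hgzero
  filter_upwards [hfinal] with t ht hpos
  simp only [hgdef, Pi.zero_apply] at ht
  have he : Real.exp (-ρ * (t + θ * (k : ℝ))) ≠ 0 := (Real.exp_pos _).ne'
  have hF : fDen r θ f₀ αs k t ≠ 0 := hpos.ne'
  have hmid : 1 / 4 - αs (t + θ * (k : ℝ)) * (1 - αs (t + θ * (k : ℝ))) = 0 := by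
    rcases mul_eq_zero.1 ht with h | h
    · rcases mul_eq_zero.1 h with h | h
      · exact absurd h he
      · exact h
    · exact absurd h hF
  have hsq : (αs (t + θ * (k : ℝ)) - 1 / 2) ^ 2 = 0 := by linear_combination hmid
  have := pow_eq_zero_iff (n := 2) (by norm_num) |>.1 hsq
  linarith
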